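/- arXiv:2308.14919 — 2 statements merged into one kernel-verified Lean document; each statement's English description precedes it below -/
import Mathlib

section
/- Cover time bound: Let (X_t)_{t≥0} be a Markov chain on a finite state space S of size S with τ_s < ∞ for all s, and δ ∈ (0,1). Then the cover time C := inf{ t : {X_0, …, X_t} = S } satisfies, with probability at least 1 − δ, C ≤ e · (max_{s∈S} τ_s) · log( e·S/δ ). -/
open MeasureTheory ProbabilityTheory Filter
open scoped ENNReal ENat Classical

noncomputable section

/-- `avoidProb P s t x`: the probability that a Markov chain with transition kernel `P`
started at `x` avoids state `s` during the next `t` steps. -/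
def avoidProb {S : Type*} [Fintype S] [DecidableEq S] (P : S → S → ℝ≥0∞) (s : S) :
    ℕ → S → ℝ≥0∞
  | 0, _ => 1
  | t + 1, x => ∑ y ∈ Finset.univ.erase s, P x y * avoidProb P s t y

/-- Expected first return time to `s` of a chain with kernel `P` started at `x`. -/
def expRet {S : Type*} [Fintype S] [DecidableEq S] (P : S → S → ℝ≥0∞) (s x : S) : ℝ≥0∞ :=
  ∑' t : ℕ, avoidProb P s t x

/-- Maximal expected hitting time `τ_s = max_{x} E_x[H_s^+]`. -/
def maxHit {S : Type*} [Fintype S] [DecidableEq S] (P : S → S → ℝ≥0∞) (s : S) : ℝ≥0∞ :=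
  ⨆ x, expRet P s x

/-- The cover time `C = inf { t : {X_0, …, X_t} = S }` of the process `X`. -/
def coverTime {S Ω : Type*} (X : ℕ → Ω → S) (ω : Ω) : ℕ∞ :=
  ⨅ (t : ℕ) (_ : ∀ s : S, ∃ i ≤ t, X i ω = s), (t : ℕ∞)


section Aux
set_option linter.unusedSectionVars false
variable {S : Type*} [Fintype S] [DecidableEq S] (P : S → S → ℝ≥0∞) (s : S)

lemma avoid_le_one (hrow : ∀ x, ∑ y, P x y = 1) : ∀ t x, avoidProb P s t x ≤ 1 := by
  intro t
  induction t with
  | zero => intro x; simp [avoidProb]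
  | succ t ih =>
    intro x
    calc ∑ y ∈ Finset.univ.erase s, P x y * avoidProb P s t y
        ≤ ∑ y ∈ Finset.univ.erase s, P x y * 1 :=
          Finset.sum_le_sum fun y _ => mul_le_mul_right (ih y) _
      _ ≤ ∑ y, P x y := by
          simp only [mul_one]
          exact Finset.sum_le_sum_of_subset (Finset.erase_subset _ _)
      _ = 1 := hrow x

lemma avoid_succ_le (hrow : ∀ x, ∑ y, P x y = 1) :
    ∀ t x, avoidProb P s (t + 1) x ≤ avoidProb P s t x := by
  intro t
  induction t with
  | zero => intro x; exact avoid_le_one P s hrow 1 x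
  | succ t ih =>
    intro x
    exact Finset.sum_le_sum fun y _ => mul_le_mul_right (ih y) _

lemma avoid_anti (hrow : ∀ x, ∑ y, P x y = 1) {m n : ℕ} (h : m ≤ n) (x : S) :
    avoidProb P s n x ≤ avoidProb P s m x := by
  induction n with
  | zero => simp_all
  | succ n ih =>
    rcases Nat.lt_or_ge m (n+1) with h' | h'
    · exact le_trans (avoid_succ_le P s hrow n x) (ih (Nat.lt_succ_iff.mp h'))
    · have : m = n + 1 := le_antisymm h h'
      simp [this]

/-- sup over starting states of avoidance probability -/
def bb (t : ℕ) : ℝ≥0∞ := ⨆ x, avoidProb P s t x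

lemma avoid_add_le (t n : ℕ) (x : S) :
    avoidProb P s (t + n) x ≤ avoidProb P s t x * bb P s n := by
  induction t generalizing x with
  | zero => simpa [avoidProb, bb] using le_iSup (fun y => avoidProb P s n y) x
  | succ t ih =>
    have : t + 1 + n = (t + n) + 1 := by omega
    rw [this]
    show ∑ y ∈ Finset.univ.erase s, P x y * avoidProb P s (t + n) y ≤ _
    calc ∑ y ∈ Finset.univ.erase s, P x y * avoidProb P s (t + n) y
        ≤ ∑ y ∈ Finset.univ.erase s, P x y * (avoidProb P s t y * bb P s n) :=
          Finset.sum_le_sum fun y _ => mul_le_mul_right (ih y) _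
      _ = (∑ y ∈ Finset.univ.erase s, P x y * avoidProb P s t y) * bb P s n := by
          rw [Finset.sum_mul]; exact Finset.sum_congr rfl fun y _ => (mul_assoc _ _ _).symm
      _ = avoidProb P s (t + 1) x * bb P s n := rfl

lemma bb_add_le (t n : ℕ) : bb P s (t + n) ≤ bb P s t * bb P s n := by
  refine iSup_le fun x => le_trans (avoid_add_le P s t n x) ?_
  exact mul_le_mul_left (le_iSup (fun y => avoidProb P s t y) x) _

lemma bb_pow [Nonempty S] (T k : ℕ) : bb P s (k * T) ≤ bb P s T ^ k := by
  induction k with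
  | zero => simp [bb, avoidProb]
  | succ k ih =>
    have : (k + 1) * T = k * T + T := by ring
    rw [this, pow_succ]
    exact le_trans (bb_add_le P s (k * T) T) (mul_le_mul_left ih _)

lemma bb_anti [Nonempty S] (hrow : ∀ x, ∑ y, P x y = 1) {m n : ℕ} (h : m ≤ n) :
    bb P s n ≤ bb P s m :=
  iSup_mono fun x => avoid_anti P s hrow h x

lemma one_le_maxHit : 1 ≤ maxHit P s := by
  have h1 : (1 : ℝ≥0∞) ≤ expRet P s s := by
    have := ENNReal.le_tsum (f := fun t => avoidProb P s t s) 0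
    simpa [avoidProb, expRet] using this
  exact le_trans h1 (le_iSup (fun x => expRet P s x) s)

lemma bb_le_div (hrow : ∀ x, ∑ y, P x y = 1) (T : ℕ) (hT : T ≠ 0) :
    bb P s T ≤ (maxHit P s - 1) / T := by
  refine iSup_le fun x => ?_
  rw [ENNReal.le_div_iff_mul_le (Or.inl (by exact_mod_cast hT)) (Or.inl (by simp))]
  refine ENNReal.le_sub_of_add_le_left (by simp) ?_
  have key : 1 + avoidProb P s T x * T ≤ ∑ k ∈ Finset.range (T + 1), avoidProb P s k x := by
    rw [Finset.sum_range_succ' (fun k => avoidProb P s k x) T]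
    have h0 : avoidProb P s 0 x = 1 := rfl
    rw [h0, add_comm 1 (avoidProb P s T x * (T:ℝ≥0∞))]
    refine add_le_add_left ?_ 1
    calc avoidProb P s T x * T = ∑ _k ∈ Finset.range T, avoidProb P s T x := by
          simp [Finset.sum_const, mul_comm]
      _ ≤ ∑ k ∈ Finset.range T, avoidProb P s (k + 1) x :=
          Finset.sum_le_sum fun k hk =>
            avoid_anti P s hrow (Nat.succ_le_of_lt (Finset.mem_range.mp hk)) x
      _ ≤ _ := le_refl _
  refine le_trans key ?_
  refine le_trans (ENNReal.sum_le_tsum _) ?_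
  exact le_iSup (fun y => expRet P s y) x

end Aux

section Aux2
set_option linter.unusedSectionVars false
variable {S : Type*} [Fintype S] [DecidableEq S]
variable {Ω : Type*} [MeasurableSpace Ω]

def FF [MeasurableSpace S] (μ : Measure Ω) (X : ℕ → Ω → S) (P : S → S → ℝ≥0∞) (s : S)
    (n t : ℕ) : ℝ≥0∞ :=
  ∑ h : Fin (t + 1) → S,
    if ∀ i : Fin (t + 1), i.val ≠ 0 → h i ≠ s then
      avoidProb P s n (h (Fin.last t)) * μ {ω | ∀ i : Fin (t + 1), X i.val ω = h i}
    else 0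

variable [MeasurableSpace S] [MeasurableSingletonClass S]
  (μ : Measure Ω) [IsProbabilityMeasure μ]
  (X : ℕ → Ω → S) (P : S → S → ℝ≥0∞) (s : S)

lemma FF_step
    (hmarkov : ∀ (t : ℕ) (h : Fin (t + 1) → S) (s' : S),
      μ {ω | X (t + 1) ω = s' ∧ ∀ i : Fin (t + 1), X i.val ω = h i}
        = P (h (Fin.last t)) s' * μ {ω | ∀ i : Fin (t + 1), X i.val ω = h i})
    (n t : ℕ) : FF μ X P s n (t + 1) = FF μ X P s (n + 1) t := by
  unfold FF
  rw [← Equiv.sum_comp (Fin.snocEquiv (fun _ : Fin (t + 2) => S))]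
  rw [Fintype.sum_prod_type]
  rw [Finset.sum_comm]
  refine Finset.sum_congr rfl fun g _ => ?_
  have hset : ∀ y : S, {ω | ∀ i : Fin (t + 2), X i.val ω = Fin.snocEquiv (fun _ => S) (y, g) i}
      = {ω | X (t + 1) ω = y ∧ ∀ i : Fin (t + 1), X i.val ω = g i} := by
    intro y
    ext ω
    simp only [Set.mem_setOf_eq, Fin.snocEquiv]
    constructor
    · intro H
      refine ⟨?_, fun i => ?_⟩
      · have := H (Fin.last (t + 1))
        simpa [Fin.snoc_last] using this
      · have := H i.castSucc
        simpa [Fin.snoc_castSucc] using this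
    · intro ⟨h1, h2⟩ i
      induction i using Fin.lastCases with
      | last => simpa [Fin.snoc_last] using h1
      | cast i => simpa [Fin.snoc_castSucc] using h2 i
  have hcond : ∀ y : S,
      (∀ i : Fin (t + 2), i.val ≠ 0 → Fin.snocEquiv (fun _ => S) (y, g) i ≠ s)
        ↔ ((∀ i : Fin (t + 1), i.val ≠ 0 → g i ≠ s) ∧ y ≠ s) := by
    intro y
    simp only [Fin.snocEquiv]
    constructor
    · intro H
      refine ⟨fun i hi => ?_, ?_⟩
      · have := H i.castSucc (by simpa using hi)
        simpa [Fin.snoc_castSucc] using this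
      · have := H (Fin.last (t + 1)) (by simp [Fin.last])
        simpa [Fin.snoc_last] using this
    · intro ⟨H1, H2⟩ i hi
      induction i using Fin.lastCases with
      | last => simpa [Fin.snoc_last] using H2
      | cast i =>
        by_cases h0 : i.val = 0
        · -- castSucc of i has val = i.val = 0, contradiction with hi
          exact absurd (by simpa using h0) hi
        · simpa [Fin.snoc_castSucc] using H1 i h0
  have hlastval : ∀ y : S, Fin.snocEquiv (fun _ : Fin (t+2) => S) (y, g) (Fin.last (t + 1)) = y := by
    intro y; simp [Fin.snocEquiv, Fin.snoc_last]
  by_cases hg : ∀ i : Fin (t + 1), i.val ≠ 0 → g i ≠ s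
  · rw [if_pos hg]
    calc (∑ y : S, if (∀ i : Fin (t + 2), i.val ≠ 0 → Fin.snocEquiv (fun _ => S) (y, g) i ≠ s) then
            avoidProb P s n (Fin.snocEquiv (fun _ : Fin (t+2) => S) (y, g) (Fin.last (t + 1)))
              * μ {ω | ∀ i : Fin (t + 2), X i.val ω = Fin.snocEquiv (fun _ => S) (y, g) i}
          else 0)
        = ∑ y : S, (if y ≠ s then
            avoidProb P s n y * (P (g (Fin.last t)) y * μ {ω | ∀ i : Fin (t + 1), X i.val ω = g i})
          else 0) := by
          refine Finset.sum_congr rfl fun y _ => ?_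
          rw [hset y, hmarkov t g y, hlastval y]
          by_cases hy : y ≠ s
          · rw [if_pos ((hcond y).mpr ⟨hg, hy⟩), if_pos hy]
          · rw [if_neg (fun H => hy ((hcond y).mp H).2), if_neg hy]
      _ = ∑ y ∈ Finset.univ.erase s, avoidProb P s n y
            * (P (g (Fin.last t)) y * μ {ω | ∀ i : Fin (t + 1), X i.val ω = g i}) := by
          rw [Finset.sum_ite, Finset.sum_const_zero, add_zero]
          refine Finset.sum_congr ?_ fun y _ => rfl
          ext y
          simp [Finset.mem_erase, Finset.mem_filter, and_comm]
      _ = avoidProb P s (n + 1) (g (Fin.last t)) * μ {ω | ∀ i : Fin (t + 1), X i.val ω = g i} := by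
          show _ = (∑ y ∈ Finset.univ.erase s, P (g (Fin.last t)) y * avoidProb P s n y) * _
          rw [Finset.sum_mul]
          exact Finset.sum_congr rfl fun y _ => by ring
  · rw [if_neg hg]
    refine Finset.sum_eq_zero fun y _ => ?_
    rw [if_neg (fun H => hg ((hcond y).mp H).1)]

lemma hist_measurable (hX : ∀ t, Measurable (X t)) (t : ℕ) (h : Fin (t + 1) → S) :
    MeasurableSet {ω | ∀ i : Fin (t + 1), X i.val ω = h i} := by
  have : {ω | ∀ i : Fin (t + 1), X i.val ω = h i} = ⋂ i : Fin (t + 1), X i.val ⁻¹' {h i} := by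
    ext ω; simp [Set.mem_iInter]
  rw [this]
  exact MeasurableSet.iInter fun i => (hX i.val) (measurableSet_singleton _)

lemma FF_base (hX : ∀ t, Measurable (X t)) (t : ℕ) :
    μ {ω | ∀ i : ℕ, 0 < i → i ≤ t → X i ω ≠ s} = FF μ X P s 0 t := by
  have hE : {ω | ∀ i : ℕ, 0 < i → i ≤ t → X i ω ≠ s}
      = ⋃ h ∈ Finset.univ.filter (fun h : Fin (t + 1) → S => ∀ i : Fin (t + 1), i.val ≠ 0 → h i ≠ s),
          {ω | ∀ i : Fin (t + 1), X i.val ω = h i} := by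
    ext ω
    simp only [Set.mem_setOf_eq, Set.mem_iUnion, Finset.mem_filter, Finset.mem_univ, true_and]
    constructor
    · intro H
      refine ⟨fun i => X i.val ω, fun i hi => H i.val (Nat.pos_of_ne_zero hi) (Nat.lt_succ_iff.mp i.isLt), fun i => rfl⟩
    · rintro ⟨h, hc, hω⟩ i hi0 hit
      have hlt : i < t + 1 := Nat.lt_succ_of_le hit
      have := hc ⟨i, hlt⟩ (by simpa using Nat.pos_iff_ne_zero.mp hi0)
      rw [← hω ⟨i, hlt⟩] at this
      exact this
  rw [hE, measure_biUnion_finset ?disj ?meas]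
  · unfold FF
    rw [Finset.sum_ite, Finset.sum_const_zero, add_zero]
    refine Finset.sum_congr rfl fun h _ => ?_
    simp [avoidProb]
  case disj =>
    intro h1 h1m h2 h2m hne
    refine Set.disjoint_left.mpr fun ω hω1 hω2 => ?_
    exact hne (funext fun i => by rw [← hω1 i, ← hω2 i])
  case meas =>
    intro h _
    exact hist_measurable X hX t h

lemma FF_start (hX : ∀ t, Measurable (X t)) (n : ℕ) :
    FF μ X P s n 0 ≤ ⨆ x, avoidProb P s n x := by
  unfold FF
  have hcond : ∀ h : Fin 1 → S, (∀ i : Fin 1, i.val ≠ 0 → h i ≠ s) := by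
    intro h i hi
    exact absurd (by omega : i.val = 0) hi
  calc (∑ h : Fin 1 → S, if ∀ i : Fin 1, i.val ≠ 0 → h i ≠ s then
          avoidProb P s n (h (Fin.last 0)) * μ {ω | ∀ i : Fin 1, X i.val ω = h i} else 0)
      = ∑ h : Fin 1 → S, avoidProb P s n (h (Fin.last 0)) * μ {ω | ∀ i : Fin 1, X i.val ω = h i} :=
        Finset.sum_congr rfl fun h _ => if_pos (hcond h)
    _ ≤ ∑ h : Fin 1 → S, (⨆ x, avoidProb P s n x) * μ {ω | ∀ i : Fin 1, X i.val ω = h i} :=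
        Finset.sum_le_sum fun h _ => mul_le_mul_left (le_iSup (fun x => avoidProb P s n x) _) _
    _ = (⨆ x, avoidProb P s n x) * ∑ h : Fin 1 → S, μ {ω | ∀ i : Fin 1, X i.val ω = h i} := by
        rw [Finset.mul_sum]
    _ ≤ (⨆ x, avoidProb P s n x) * 1 := by
        refine mul_le_mul_right ?_ _
        have hsets : ∀ h : Fin 1 → S, {ω | ∀ i : Fin 1, X i.val ω = h i} = X 0 ⁻¹' {h 0} := by
          intro h; ext ω
          simp only [Set.mem_setOf_eq, Set.mem_preimage, Set.mem_singleton_iff]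
          constructor
          · intro H; exact H 0
          · intro H i
            have : i = 0 := Subsingleton.elim i 0
            rw [this]; exact H
        calc ∑ h : Fin 1 → S, μ {ω | ∀ i : Fin 1, X i.val ω = h i}
            = ∑ h : Fin 1 → S, μ (X 0 ⁻¹' {h 0}) := Finset.sum_congr rfl fun h _ => by rw [hsets h]
          _ = ∑ x : S, μ (X 0 ⁻¹' {x}) := by
              rw [← Equiv.sum_comp (Equiv.funUnique (Fin 1) S).symm (fun h : Fin 1 → S => μ (X 0 ⁻¹' {h 0}))]
              rfl
          _ = μ (X 0 ⁻¹' ↑(Finset.univ : Finset S)) :=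
              MeasureTheory.sum_measure_preimage_singleton _ fun y _ => (hX 0) (measurableSet_singleton _)
          _ = 1 := by simp
          _ ≤ 1 := le_refl 1
    _ = ⨆ x, avoidProb P s n x := mul_one _

lemma FF_shift
    (hmarkov : ∀ (t : ℕ) (h : Fin (t + 1) → S) (s' : S),
      μ {ω | X (t + 1) ω = s' ∧ ∀ i : Fin (t + 1), X i.val ω = h i}
        = P (h (Fin.last t)) s' * μ {ω | ∀ i : Fin (t + 1), X i.val ω = h i}) :
    ∀ t n, FF μ X P s n t = FF μ X P s (n + t) 0 := by
  intro t
  induction t with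
  | zero => intro n; rfl
  | succ t ih =>
    intro n
    rw [FF_step μ X P s hmarkov n t, ih (n + 1)]
    congr 1
    omega

lemma measure_avoid_le (hX : ∀ t, Measurable (X t))
    (hmarkov : ∀ (t : ℕ) (h : Fin (t + 1) → S) (s' : S),
      μ {ω | X (t + 1) ω = s' ∧ ∀ i : Fin (t + 1), X i.val ω = h i}
        = P (h (Fin.last t)) s' * μ {ω | ∀ i : Fin (t + 1), X i.val ω = h i}) (t : ℕ) :
    μ {ω | ∀ i : ℕ, 0 < i → i ≤ t → X i ω ≠ s} ≤ ⨆ x, avoidProb P s t x := by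
  rw [FF_base μ X P s hX t, FF_shift μ X P s hmarkov t 0]
  simpa using FF_start μ X P s hX t

end Aux2

/-- with probability at least `1 - δ`,
the cover time satisfies `C ≤ e · (max_s τ_s) · log (e·S/δ)`. -/
theorem stmt8 {S : Type*} [Fintype S] [DecidableEq S] [Nonempty S] [MeasurableSpace S]
    [MeasurableSingletonClass S]
    {Ω : Type*} [MeasurableSpace Ω] (μ : Measure Ω) [IsProbabilityMeasure μ]
    (X : ℕ → Ω → S) (hX : ∀ t, Measurable (X t))
    (P : S → S → ℝ≥0∞) (hrow : ∀ x, ∑ y, P x y = 1)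
    (hmarkov : ∀ (t : ℕ) (h : Fin (t + 1) → S) (s' : S),
      μ {ω | X (t + 1) ω = s' ∧ ∀ i : Fin (t + 1), X i.val ω = h i}
        = P (h (Fin.last t)) s' * μ {ω | ∀ i : Fin (t + 1), X i.val ω = h i})
    (hτ : ∀ s, maxHit P s ≠ ⊤) (δ : ℝ) (hδ0 : 0 < δ) (hδ1 : δ < 1) :
    μ {ω | (coverTime X ω : ℝ≥0∞)
        ≤ ENNReal.ofReal
            (Real.exp 1 * (⨆ s, maxHit P s).toReal
              * Real.log (Real.exp 1 * (Fintype.card S) / δ))}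
      ≥ ENNReal.ofReal (1 - δ) := by
  classical
  have he2 : (2 : ℝ) ≤ Real.exp 1 := by
    have := Real.add_one_le_exp 1
    linarith
  have hepos : (0:ℝ) < Real.exp 1 := Real.exp_pos 1
  set τ : ℝ≥0∞ := ⨆ s, maxHit P s with hτdef
  have hcard1 : (1:ℝ) ≤ Fintype.card S := by exact_mod_cast Fintype.card_pos
  have hcardpos : (0:ℝ) < Fintype.card S := lt_of_lt_of_le one_pos hcard1
  have hτtop : τ ≠ ⊤ := by
    have hb : τ ≤ Finset.univ.sup (maxHit P) :=
      iSup_le fun s => Finset.le_sup (Finset.mem_univ s)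
    have : Finset.univ.sup (maxHit P) < ⊤ :=
      Finset.sup_lt_iff (by simp) |>.mpr fun s _ => lt_top_iff_ne_top.mpr (hτ s)
    exact ne_top_of_le_ne_top (lt_top_iff_ne_top.mp this) hb
  set r : ℝ := τ.toReal with hrdef
  have hr1 : (1:ℝ) ≤ r := by
    have h1 : (1 : ℝ≥0∞) ≤ τ :=
      le_trans (one_le_maxHit P (Classical.arbitrary S)) (le_iSup (fun s => maxHit P s) _)
    have := ENNReal.toReal_mono hτtop h1
    simpa using this
  set L : ℝ := Real.log (Real.exp 1 * (Fintype.card S) / δ) with hLdef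
  have hargpos : (0:ℝ) < Real.exp 1 * (Fintype.card S) / δ := by positivity
  have hL1 : (1:ℝ) ≤ L := by
    rw [hLdef]
    calc (1:ℝ) = Real.log (Real.exp 1) := (Real.log_exp 1).symm
      _ ≤ _ := by
          apply Real.log_le_log hepos
          rw [le_div_iff₀ hδ0]
          nlinarith
  set B : ℝ := Real.exp 1 * r * L with hBdef
  have hB0 : (0:ℝ) ≤ B := by positivity
  set t : ℕ := ⌊B⌋₊ with htdef
  have htB : B < (t:ℝ) + 1 := Nat.lt_floor_add_one B
  -- the per-state bound
  have key : ∀ s : S, bb P s t ≤ ENNReal.ofReal (δ / Fintype.card S) := by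
    intro s
    set τs : ℝ≥0∞ := maxHit P s with hτsdef
    set rs : ℝ := τs.toReal with hrsdef
    have hrs1 : (1:ℝ) ≤ rs := by
      have := ENNReal.toReal_mono (hτ s) (one_le_maxHit P s)
      simpa using this
    have hrsr : rs ≤ r :=
      ENNReal.toReal_mono hτtop (le_iSup (fun s => maxHit P s) s)
    set T : ℕ := max ⌈Real.exp 1 * (rs - 1)⌉₊ 1 with hTdef
    have hT1 : 1 ≤ T := le_max_right _ _
    have hTpos : (0:ℝ) < T := by exact_mod_cast hT1
    have hTub : (T:ℝ) ≤ Real.exp 1 * (r - 1) + 1 := by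
      rw [hTdef]
      push_cast [Nat.cast_max]
      apply max_le
      · have h1 : (⌈Real.exp 1 * (rs - 1)⌉₊ : ℝ) < Real.exp 1 * (rs - 1) + 1 :=
          Nat.ceil_lt_add_one (by nlinarith)
        nlinarith
      · nlinarith
    have hTlb : Real.exp 1 * (rs - 1) ≤ (T:ℝ) := by
      rw [hTdef]
      push_cast [Nat.cast_max]
      exact le_trans (Nat.le_ceil _) (le_max_left _ _)
    have hbbT : bb P s T ≤ ENNReal.ofReal (Real.exp (-1)) := by
      refine le_trans (bb_le_div P s hrow T (by omega)) ?_
      have h1 : maxHit P s - 1 = ENNReal.ofReal (rs - 1) := by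
        rw [ENNReal.ofReal_sub _ zero_le_one, ENNReal.ofReal_one, hrsdef, hτsdef,
          ENNReal.ofReal_toReal (hτ s)]
      have h2 : (T : ℝ≥0∞) = ENNReal.ofReal (T:ℝ) := by
        rw [ENNReal.ofReal_natCast]
      rw [← hτsdef, h1, h2, ← ENNReal.ofReal_div_of_pos hTpos]
      apply ENNReal.ofReal_le_ofReal
      rw [div_le_iff₀ hTpos, Real.exp_neg, inv_mul_eq_div, le_div_iff₀ hepos]
      nlinarith [hTlb]
    set k : ℕ := t / T with hkdef
    have hkT : k * T ≤ t := Nat.div_mul_le_self t T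
    have htk : (t:ℝ) < ((k:ℝ) + 1) * T := by
      have h : t < (k + 1) * T := by
        have hmod := Nat.mod_lt t (show 0 < T by omega)
        have hdm := Nat.div_add_mod t T
        rw [hkdef]
        nlinarith [Nat.div_add_mod t T, Nat.mod_lt t (show 0 < T by omega)]
      exact_mod_cast h
    have hLt : L * T ≤ (t:ℝ) := by
      have h1 : L * T ≤ L * (Real.exp 1 * (r - 1) + 1) :=
        mul_le_mul_of_nonneg_left hTub (by linarith)
      have h2 : L * (Real.exp 1 * (r - 1) + 1) ≤ B - 1 := by
        rw [hBdef]; nlinarith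
      linarith
    have hkL : L - 1 ≤ (k:ℝ) := by
      have h : L * T < ((k:ℝ) + 1) * T := lt_of_le_of_lt hLt htk
      have hLk : L < (k:ℝ) + 1 := lt_of_mul_lt_mul_right h (le_of_lt hTpos)
      linarith
    calc bb P s t ≤ bb P s (k * T) := bb_anti P s hrow hkT
      _ ≤ bb P s T ^ k := bb_pow P s T k
      _ ≤ ENNReal.ofReal (Real.exp (-1)) ^ k := pow_le_pow_left' hbbT k
      _ = ENNReal.ofReal (Real.exp (-1) ^ k) :=
          (ENNReal.ofReal_pow (le_of_lt (Real.exp_pos _)) k).symm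
      _ = ENNReal.ofReal (Real.exp (-(k:ℝ))) := by
          rw [← Real.exp_nat_mul]
          norm_num
      _ ≤ ENNReal.ofReal (δ / Fintype.card S) := by
          apply ENNReal.ofReal_le_ofReal
          have hexp : Real.exp (-(k:ℝ)) ≤ Real.exp (1 - L) :=
            Real.exp_le_exp.mpr (by linarith)
          refine le_trans hexp (le_of_eq ?_)
          rw [Real.exp_sub, hLdef, Real.exp_log hargpos]
          field_simp
  -- union bound and conclusion
  set G : Set Ω := {ω | ∀ s : S, ∃ i ≤ t, X i ω = s} with hGdef
  have hGsub : G ⊆ {ω | (coverTime X ω : ℝ≥0∞)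
      ≤ ENNReal.ofReal (Real.exp 1 * τ.toReal * L)} := by
    intro ω hω
    have h1 : coverTime X ω ≤ (t : ℕ∞) := by
      exact iInf₂_le t hω
    have h2 : (coverTime X ω : ℝ≥0∞) ≤ ((t : ℕ∞) : ℝ≥0∞) := ENat.toENNReal_le.mpr h1
    refine le_trans h2 ?_
    rw [ENat.toENNReal_coe, ← ENNReal.ofReal_natCast]
    exact ENNReal.ofReal_le_ofReal (Nat.floor_le hB0)
  have hGc : μ Gᶜ ≤ ENNReal.ofReal δ := by
    have hsub : Gᶜ ⊆ ⋃ s : S, {ω | ∀ i : ℕ, 0 < i → i ≤ t → X i ω ≠ s} := by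
      intro ω hω
      simp only [hGdef, Set.mem_compl_iff, Set.mem_setOf_eq] at hω
      push_neg at hω
      obtain ⟨s, hs⟩ := hω
      exact Set.mem_iUnion.mpr ⟨s, fun i _ hit => hs i hit⟩
    calc μ Gᶜ ≤ μ (⋃ s : S, {ω | ∀ i : ℕ, 0 < i → i ≤ t → X i ω ≠ s}) := measure_mono hsub
      _ ≤ ∑' s : S, μ {ω | ∀ i : ℕ, 0 < i → i ≤ t → X i ω ≠ s} := measure_iUnion_le _
      _ = ∑ s : S, μ {ω | ∀ i : ℕ, 0 < i → i ≤ t → X i ω ≠ s} := tsum_fintype _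
      _ ≤ ∑ _s : S, ENNReal.ofReal (δ / Fintype.card S) :=
          Finset.sum_le_sum fun s _ =>
            le_trans (measure_avoid_le μ X P s hX hmarkov t) (key s)
      _ = (Fintype.card S : ℝ≥0∞) * ENNReal.ofReal (δ / Fintype.card S) := by
          rw [Finset.sum_const, Finset.card_univ, nsmul_eq_mul]
      _ = ENNReal.ofReal δ := by
          rw [← ENNReal.ofReal_natCast, ← ENNReal.ofReal_mul (le_of_lt hcardpos)]
          congr 1
          field_simp
  have hμG : ENNReal.ofReal (1 - δ) ≤ μ G := by
    have h1 : (1:ℝ≥0∞) ≤ μ G + μ Gᶜ := by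
      calc (1:ℝ≥0∞) = μ Set.univ := (measure_univ (μ := μ)).symm
        _ = μ (G ∪ Gᶜ) := by rw [Set.union_compl_self]
        _ ≤ μ G + μ Gᶜ := measure_union_le _ _
    have h2 : (1:ℝ≥0∞) - μ Gᶜ ≤ μ G := tsub_le_iff_right.mpr h1
    refine le_trans ?_ h2
    refine le_trans ?_ (tsub_le_tsub_left hGc 1)
    refine ENNReal.le_sub_of_add_le_left ENNReal.ofReal_ne_top ?_
    rw [← ENNReal.ofReal_add (le_of_lt hδ0) (by linarith), ← ENNReal.ofReal_one]
    exact ENNReal.ofReal_le_ofReal (by linarith)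
  exact le_trans hμG (measure_mono hGsub)
end
end

section
/- Potential-based reward shaping can strictly decrease MEHC: For the two-state MDP M with states {s_1, s_2}, actions {a_1, a_2}, r_max = 1, parameters 0 < β < α < 1 and ε ∈ (0,1), where action a_1 stays in the current state with probability 1, action a_2 switches to the other state with probability ε and stays with probability 1 − ε, and mean rewards are 1 − α for both actions at s_1 and 1 − β for both actions at s_2: (i) κ(M) = α/ε; (ii) with potential φ(s_1) = 0, φ(s_2) = (α − β)/(2ε), the shaped MDP satisfies κ(M^φ) = (α + β)/(2ε) < κ(M). -/
open scoped ENNReal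

noncomputable section

/-- The probability that a Markov chain with transition kernel `Q` started at `s`
traverses exactly the initial path segment `path`. -/
def pathProb {S : Type*} [DecidableEq S] (Q : S → S → ℝ≥0∞) (s : S) {t : ℕ}
    (path : Fin (t + 1) → S) : ℝ≥0∞ :=
  (if path 0 = s then 1 else 0) * ∏ i : Fin t, Q (path i.castSucc) (path i.succ)

/-- The expected hitting time `E[h_{s→s'}]` of `s'` from `s` for the kernel `Q`,
via `E[h] = ∑_t P[h > t]`, where `h > t` iff the path avoids `s'` up to time `t`. -/
def hitTimeE {S : Type*} [Fintype S] [DecidableEq S] (Q : S → S → ℝ≥0∞) (s s' : S) :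
    ℝ≥0∞ :=
  ∑' t : ℕ, ∑ path : Fin (t + 1) → S,
    if ∀ i, path i ≠ s' then pathProb Q s path else 0

/-- The expected hitting cost `E[∑_{t=0}^{h_{s→s'}-1} c(s_t)]` of `s'` from `s`
for the kernel `Q` and per-state cost `c`. -/
def hitCostE {S : Type*} [Fintype S] [DecidableEq S] (Q : S → S → ℝ≥0∞) (c : S → ℝ≥0∞)
    (s s' : S) : ℝ≥0∞ :=
  ∑' t : ℕ, ∑ path : Fin (t + 1) → S,
    if ∀ i, path i ≠ s' then pathProb Q s path * c (path (Fin.last t)) else 0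

/-- The state-transition kernel induced by following policy `π` in an MDP with
transition function `p`. -/
def polKernel {S A : Type*} (p : S → A → S → ℝ≥0∞) (π : S → A) : S → S → ℝ≥0∞ :=
  fun s s' => p s (π s) s'

/-- The diameter `D(M) = max_{s,s'} min_π E[h_{s→s'}(M,π)]` of an MDP. -/
def diam {S A : Type*} [Fintype S] [DecidableEq S] (p : S → A → S → ℝ≥0∞) : ℝ≥0∞ :=
  ⨆ s, ⨆ s', ⨅ π : S → A, hitTimeE (polKernel p π) s s'

/-- The maximum expected hitting cost
`κ(M) = max_{s,s'} min_π E[∑_{t=0}^{h_{s→s'}(M,π)-1} (r_max - r_t)]` of an MDP with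
mean rewards `rbar`. -/
def mehc {S A : Type*} [Fintype S] [DecidableEq S] (p : S → A → S → ℝ≥0∞) (rmax : ℝ)
    (rbar : S → A → ℝ) : ℝ≥0∞ :=
  ⨆ s, ⨆ s', ⨅ π : S → A,
    hitCostE (polKernel p π) (fun x => ENNReal.ofReal (rmax - rbar x (π x))) s s'

/-- The mean rewards of the PBRS-shaped MDP `M^φ`. -/
def shapedRbar {S A : Type*} [Fintype S] (p : S → A → S → ℝ≥0∞) (rbar : S → A → ℝ)
    (φ : S → ℝ) : S → A → ℝ :=
  fun s a => rbar s a - φ s + ∑ s', (p s a s').toReal * φ s'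

/-- The transitions of the two-state example MDP: at either state, action `a₁ = 0`
stays put with probability `1`, and action `a₂ = 1` switches to the other state with
probability `ε` and stays with probability `1 - ε`. -/
def exP (ε : ℝ) : Fin 2 → Fin 2 → Fin 2 → ℝ≥0∞ := fun s a s' =>
  if a = 0 then (if s' = s then 1 else 0)
  else (if s' = s then ENNReal.ofReal (1 - ε) else ENNReal.ofReal ε)

/-- The mean rewards of the two-state example MDP: `1 - α` for both actions at `s₁`
and `1 - β` for both actions at `s₂`. -/
def exRbar (α β : ℝ) : Fin 2 → Fin 2 → ℝ := fun s _ => if s = 0 then 1 - α else 1 - β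

/-- The shaping potential `φ(s₁) = 0`, `φ(s₂) = (α - β)/(2ε)`. -/
def exPot (α β ε : ℝ) : Fin 2 → ℝ := fun s => if s = 0 then 0 else (α - β) / (2 * ε)


lemma hitCostE_self {S : Type*} [Fintype S] [DecidableEq S] (Q : S → S → ℝ≥0∞)
    (c : S → ℝ≥0∞) (s : S) : hitCostE Q c s s = 0 := by
  unfold hitCostE
  rw [ENNReal.tsum_eq_zero]
  intro t
  apply Finset.sum_eq_zero
  intro path _
  split_ifs with h
  · have h0 : path 0 ≠ s := h 0
    simp [pathProb, h0]
  · rfl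

lemma hitCostE_ne (Q : Fin 2 → Fin 2 → ℝ≥0∞) (c : Fin 2 → ℝ≥0∞) (s s' : Fin 2)
    (h : s ≠ s') : hitCostE Q c s s' = c s * (1 - Q s s)⁻¹ := by
  have fin2 : ∀ x y z : Fin 2, y ≠ z → x ≠ z → x = y := by decide
  have hterm : ∀ t : ℕ,
      (∑ path : Fin (t + 1) → Fin 2,
        if ∀ i, path i ≠ s' then pathProb Q s path * c (path (Fin.last t)) else 0)
      = Q s s ^ t * c s := by
    intro t
    rw [Finset.sum_eq_single (fun _ => s)]
    · rw [if_pos (fun _ => h)]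
      simp [pathProb, Finset.prod_const]
    · intro b _ hb
      rw [if_neg]
      intro hcond
      exact hb (funext fun i => fin2 (b i) s s' h (hcond i))
    · intro hmem; exact absurd (Finset.mem_univ _) hmem
  unfold hitCostE
  simp_rw [hterm]
  rw [ENNReal.tsum_mul_right, ENNReal.tsum_geometric, mul_comm]

lemma mehc_ex (ε : ℝ) (hε0 : 0 < ε) (hε1 : ε < 1) (rbar : Fin 2 → Fin 2 → ℝ)
    (h00 : 0 < 1 - rbar 0 0) (h10 : 0 < 1 - rbar 1 0) (hle : rbar 0 1 ≤ rbar 1 1) :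
    mehc (exP ε) 1 rbar = ENNReal.ofReal (1 - rbar 0 1) * (ENNReal.ofReal ε)⁻¹ := by
  have h2 : ∀ x : Fin 2, x = 0 ∨ x = 1 := by decide
  have hE : (1 - ENNReal.ofReal (1 - ε))⁻¹ = (ENNReal.ofReal ε)⁻¹ := by
    congr 1
    rw [← ENNReal.ofReal_one, ← ENNReal.ofReal_sub _ (by linarith)]
    norm_num
  have hQ : ∀ (π : Fin 2 → Fin 2) (s : Fin 2),
      polKernel (exP ε) π s s = if π s = 0 then 1 else ENNReal.ofReal (1 - ε) := by
    intro π s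
    by_cases hp : π s = 0 <;> simp [polKernel, exP, hp]
  have hpos : ∀ s : Fin 2, 0 < 1 - rbar s 0 := by
    intro s; rcases h2 s with h | h <;> subst h
    · exact h00
    · exact h10
  have key : ∀ s s' : Fin 2, s ≠ s' →
      (⨅ π : Fin 2 → Fin 2, hitCostE (polKernel (exP ε) π)
        (fun x => ENNReal.ofReal ((1 : ℝ) - rbar x (π x))) s s')
        = ENNReal.ofReal (1 - rbar s 1) * (ENNReal.ofReal ε)⁻¹ := by
    intro s s' hss
    apply le_antisymm
    · refine iInf_le_of_le (fun _ => 1) ?_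
      rw [hitCostE_ne _ _ _ _ hss, hQ]
      norm_num [hE]
    · refine le_iInf fun π => ?_
      rw [hitCostE_ne _ _ _ _ hss, hQ]
      rcases h2 (π s) with hp | hp <;> rw [hp]
      · norm_num
        rw [ENNReal.mul_top (ENNReal.ofReal_pos.mpr (hpos s)).ne']
        exact le_top
      · norm_num [hE]
  unfold mehc
  apply le_antisymm
  · refine iSup_le fun s => iSup_le fun s' => ?_
    by_cases hss : s = s'
    · subst hss
      refine iInf_le_of_le (fun _ => 1) ?_
      rw [hitCostE_self]
      exact zero_le
    · rw [key s s' hss]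
      rcases h2 s with h | h <;> subst h
      · exact le_refl _
      · exact mul_le_mul_left (ENNReal.ofReal_le_ofReal (by linarith)) _
  · refine le_iSup_of_le 0 (le_iSup_of_le 1 ?_)
    rw [key 0 1 (by decide)]

/-- for the two-state example MDP with `0 < β < α < 1`, `ε ∈ (0,1)` and
`r_max = 1`: (i) `κ(M) = α/ε`; (ii) with the potential `φ`, `κ(M^φ) = (α+β)/(2ε) < κ(M)`. -/
theorem stmt14 (α β ε : ℝ) (hβ0 : 0 < β) (hβα : β < α) (hα1 : α < 1)
    (hε0 : 0 < ε) (hε1 : ε < 1) :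
    mehc (exP ε) 1 (exRbar α β) = ENNReal.ofReal (α / ε)
    ∧ mehc (exP ε) 1 (shapedRbar (exP ε) (exRbar α β) (exPot α β ε))
        = ENNReal.ofReal ((α + β) / (2 * ε))
    ∧ mehc (exP ε) 1 (shapedRbar (exP ε) (exRbar α β) (exPot α β ε))
        < mehc (exP ε) 1 (exRbar α β) := by
  have hεle : (0 : ℝ) ≤ ε := hε0.le
  have hcomb : ∀ x : ℝ, 0 ≤ x →
      ENNReal.ofReal x * (ENNReal.ofReal ε)⁻¹ = ENNReal.ofReal (x / ε) := by
    intro x hx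
    rw [← ENNReal.ofReal_inv_of_pos hε0, ← ENNReal.ofReal_mul hx, div_eq_mul_inv]
  have hteps : (ENNReal.ofReal ε).toReal = ε := ENNReal.toReal_ofReal hεle
  have hteps' : (ENNReal.ofReal (1 - ε)).toReal = 1 - ε :=
    ENNReal.toReal_ofReal (by linarith)
  have h1 : mehc (exP ε) 1 (exRbar α β) = ENNReal.ofReal (α / ε) := by
    rw [mehc_ex ε hε0 hε1 _ (by norm_num [exRbar]; linarith)
      (by norm_num [exRbar]; linarith) (by norm_num [exRbar]; linarith)]
    rw [show (1 : ℝ) - exRbar α β 0 1 = α by norm_num [exRbar], hcomb α (by linarith)]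
  set sR := shapedRbar (exP ε) (exRbar α β) (exPot α β ε) with hsR
  have e00 : sR 0 0 = 1 - α := by
    simp [hsR, shapedRbar, exP, exRbar, exPot, Fin.sum_univ_two]
  have e01 : sR 0 1 = 1 - (α + β) / 2 := by
    simp [hsR, shapedRbar, exP, exRbar, exPot, Fin.sum_univ_two, hteps, hteps']
    field_simp
    ring
  have e10 : sR 1 0 = 1 - β := by
    simp [hsR, shapedRbar, exP, exRbar, exPot, Fin.sum_univ_two]
  have e11 : sR 1 1 = 1 - (α + β) / 2 := by
    simp [hsR, shapedRbar, exP, exRbar, exPot, Fin.sum_univ_two, hteps, hteps']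
    field_simp
    ring
  have h2 : mehc (exP ε) 1 sR = ENNReal.ofReal ((α + β) / (2 * ε)) := by
    rw [mehc_ex ε hε0 hε1 _ (by rw [e00]; linarith) (by rw [e10]; linarith)
      (by rw [e01, e11])]
    rw [e01, show (1 : ℝ) - (1 - (α + β) / 2) = (α + β) / 2 by ring,
      hcomb _ (by linarith), div_div]
  refine ⟨h1, h2, ?_⟩
  rw [h1, h2]
  refine (ENNReal.ofReal_lt_ofReal_iff (div_pos (by linarith) hε0)).mpr ?_
  rw [div_lt_div_iff₀ (by positivity) hε0]
  nlinarith [mul_pos hε0 (sub_pos.mpr hβα)]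
end
end
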